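/- arXiv:1411.5437 — 5 statements merged into one kernel-verified Lean document; each statement's English description precedes it below -/
import Mathlib

section
/- Let Σ be an alphabet and let R and C be positive regular expressions over Σ such that (R,C) is plural. Then the regular expression E over Σ' is positive, and an (E,E)-crossword exists if and only if an (R,C)-crossword exists. -/
namespace RegexCrossword

/-- `X` is an `(R,C)`-crossword: every row of `X` (read left to right) matches `R`
and every column (read top to bottom) matches `C`. -/
def IsCrossword {σ : Type} {m n : ℕ} (R C : RegularExpression σ)
    (X : Matrix (Fin m) (Fin n) σ) : Prop :=
  (∀ i : Fin m, (List.ofFn fun j => X i j) ∈ R.matches') ∧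
  (∀ j : Fin n, (List.ofFn fun i => X i j) ∈ C.matches')

/-- An `(R,C)`-crossword (a nonempty matrix) exists. -/
def CrosswordExists {σ : Type} (R C : RegularExpression σ) : Prop :=
  ∃ (m n : ℕ), 0 < m ∧ 0 < n ∧ ∃ X : Matrix (Fin m) (Fin n) σ, IsCrossword R C X

/-- A regular expression is positive iff the empty word does not match it. -/
def PositiveRE {σ : Type} (R : RegularExpression σ) : Prop :=
  [] ∉ R.matches'

/-- `(R,C)` is plural: both are positive and every `(R,C)`-crossword has at
least two rows and at least two columns. -/
def Plural {σ : Type} (R C : RegularExpression σ) : Prop :=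
  PositiveRE R ∧ PositiveRE C ∧
    ∀ (m n : ℕ) (X : Matrix (Fin m) (Fin n) σ),
      0 < m → 0 < n → IsCrossword R C X → 2 ≤ m ∧ 2 ≤ n

/-- The spade symbol `♠` (bottom edge marker) in the extended alphabet `σ ⊕ Fin 3`. -/
def spade {σ : Type} : σ ⊕ Fin 3 := Sum.inr 0

/-- The heart symbol `♥` (left edge marker) in the extended alphabet `σ ⊕ Fin 3`. -/
def heart {σ : Type} : σ ⊕ Fin 3 := Sum.inr 1

/-- The diamond symbol `♦` (corner marker) in the extended alphabet `σ ⊕ Fin 3`. -/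
def diamond {σ : Type} : σ ⊕ Fin 3 := Sum.inr 2

open RegularExpression in
/-- `R' := ♥R ∪ ♦♠♠♠*`. -/
def Rext {σ : Type} (R : RegularExpression σ) : RegularExpression (σ ⊕ Fin 3) :=
  char heart * R.map Sum.inl +
    char diamond * char spade * char spade * (char spade).star

open RegularExpression in
/-- `C' := C♠ ∪ ♥♥♥*♦`. -/
def Cext {σ : Type} (C : RegularExpression σ) : RegularExpression (σ ⊕ Fin 3) :=
  C.map Sum.inl * char spade +
    char heart * char heart * (char heart).star * char diamond

/-- `E := R' ∪ C'`. -/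
def Eexp {σ : Type} (R C : RegularExpression σ) : RegularExpression (σ ⊕ Fin 3) :=
  Rext R + Cext C

/-- `ρ` prepends a new leftmost column of `♥`'s to `X` and then appends a new
bottom row consisting of `♦` followed by `♠`'s. -/
def rho {σ : Type} {m n : ℕ} (X : Matrix (Fin m) (Fin n) σ) :
    Matrix (Fin (m + 1)) (Fin (n + 1)) (σ ⊕ Fin 3) := fun i j =>
  if hi : (i : ℕ) < m then
    if hj : (j : ℕ) = 0 then heart
    else Sum.inl (X ⟨i, hi⟩ ⟨(j : ℕ) - 1, by have := j.isLt; omega⟩)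
  else if (j : ℕ) = 0 then diamond else spade

open RegularExpression

variable {σ : Type}

lemma mem_kstar_char_iff (a : σ) (x : List σ) :
    x ∈ KStar.kstar ({[a]} : Language σ) ↔ ∃ k, x = List.replicate k a := by
  rw [Language.mem_kstar]
  constructor
  · rintro ⟨L, rfl, hL⟩
    induction L with
    | nil => exact ⟨0, rfl⟩
    | cons y L ih =>
      obtain ⟨k, hk⟩ := ih (fun y hy => hL y (List.mem_cons_of_mem _ hy))
      have hy : y = [a] := hL y (List.mem_cons_self)
      exact ⟨k+1, by simp [hy, hk, List.replicate_succ]⟩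
  · rintro ⟨k, rfl⟩
    refine ⟨List.replicate k [a], ?_, fun y hy => by rw [List.eq_of_mem_replicate hy]; rfl⟩
    induction k with
    | zero => rfl
    | succ k ih =>
      rw [List.replicate_succ, ih, List.replicate_succ, List.flatten_cons]
      rfl

lemma mem_E_iff (R C : RegularExpression σ) (w : List (σ ⊕ Fin 3)) :
    w ∈ (Eexp R C).matches' ↔
      (∃ v ∈ R.matches', w = heart :: v.map Sum.inl) ∨
      (∃ k, w = diamond :: List.replicate (k+2) spade) ∨
      (∃ v ∈ C.matches', w = v.map Sum.inl ++ [spade]) ∨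
      (∃ k, w = List.replicate (k+2) heart ++ [diamond]) := by
  rw [Eexp, Rext, Cext, matches'_add, Language.mem_add, matches'_add, Language.mem_add,
    matches'_add, Language.mem_add]
  constructor
  · rintro ((h | h) | (h | h))
    · rw [matches'_mul, Language.mem_mul] at h
      obtain ⟨x, hx, y, hy, rfl⟩ := h
      rw [matches'_char] at hx; change _ = _ at hx
      rw [matches'_map] at hy
      obtain ⟨v, hv, rfl⟩ := hy
      exact Or.inl ⟨v, hv, by simp [hx]⟩
    · rw [matches'_mul, Language.mem_mul] at h
      obtain ⟨x, hx, y, hy, rfl⟩ := h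
      rw [matches'_star, matches'_char, mem_kstar_char_iff] at hy
      obtain ⟨k, rfl⟩ := hy
      rw [matches'_mul, Language.mem_mul] at hx
      obtain ⟨x2, hx2, y2, hy2, rfl⟩ := hx
      rw [matches'_char] at hy2; change _ = _ at hy2
      rw [matches'_mul, Language.mem_mul] at hx2
      obtain ⟨x3, hx3, y3, hy3, rfl⟩ := hx2
      rw [matches'_char] at hy3; change _ = _ at hy3
      rw [matches'_char] at hx3; change _ = _ at hx3
      refine Or.inr (Or.inl ⟨k, ?_⟩)
      subst hx3 hy3 hy2
      simp [List.replicate_succ]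
    · rw [matches'_mul, Language.mem_mul] at h
      obtain ⟨x, hx, y, hy, rfl⟩ := h
      rw [matches'_char] at hy; change _ = _ at hy
      rw [matches'_map] at hx
      obtain ⟨v, hv, rfl⟩ := hx
      exact Or.inr (Or.inr (Or.inl ⟨v, hv, by simp [hy]⟩))
    · rw [matches'_mul, Language.mem_mul] at h
      obtain ⟨x, hx, y, hy, rfl⟩ := h
      rw [matches'_char] at hy; change _ = _ at hy
      rw [matches'_mul, Language.mem_mul] at hx
      obtain ⟨x2, hx2, y2, hy2, rfl⟩ := hx
      rw [matches'_star, matches'_char, mem_kstar_char_iff] at hy2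
      obtain ⟨k, rfl⟩ := hy2
      rw [matches'_mul, Language.mem_mul] at hx2
      obtain ⟨x3, hx3, y3, hy3, rfl⟩ := hx2
      rw [matches'_char] at hy3; change _ = _ at hy3
      rw [matches'_char] at hx3; change _ = _ at hx3
      refine Or.inr (Or.inr (Or.inr ⟨k, ?_⟩))
      subst hx3 hy3 hy
      simp [List.replicate_succ]
  · rintro (⟨v, hv, rfl⟩ | ⟨k, rfl⟩ | ⟨v, hv, rfl⟩ | ⟨k, rfl⟩)
    · refine Or.inl (Or.inl ?_)
      rw [matches'_mul, Language.mem_mul]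
      exact ⟨[heart], by rw [matches'_char]; rfl, v.map Sum.inl,
        by rw [matches'_map]; exact ⟨v, hv, rfl⟩, rfl⟩
    · refine Or.inl (Or.inr ?_)
      rw [matches'_mul, Language.mem_mul]
      refine ⟨[diamond, spade, spade], ?_, List.replicate k spade, ?_, ?_⟩
      · rw [matches'_mul, Language.mem_mul]
        refine ⟨[diamond, spade], ?_, [spade], by rw [matches'_char]; rfl, rfl⟩
        rw [matches'_mul, Language.mem_mul]
        exact ⟨[diamond], by rw [matches'_char]; rfl, [spade], by rw [matches'_char]; rfl, rfl⟩
      · rw [matches'_star, matches'_char, mem_kstar_char_iff]; exact ⟨k, rfl⟩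
      · simp [List.replicate_succ]
    · refine Or.inr (Or.inl ?_)
      rw [matches'_mul, Language.mem_mul]
      exact ⟨v.map Sum.inl, by rw [matches'_map]; exact ⟨v, hv, rfl⟩, [spade],
        by rw [matches'_char]; rfl, rfl⟩
    · refine Or.inr (Or.inr ?_)
      rw [matches'_mul, Language.mem_mul]
      refine ⟨List.replicate (k+2) heart, ?_, [diamond], by rw [matches'_char]; rfl, rfl⟩
      rw [matches'_mul, Language.mem_mul]
      refine ⟨[heart, heart], ?_, List.replicate k heart, ?_, by simp [List.replicate_succ]⟩
      · rw [matches'_mul, Language.mem_mul]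
        exact ⟨[heart], by rw [matches'_char]; rfl, [heart], by rw [matches'_char]; rfl, rfl⟩
      · rw [matches'_star, matches'_char, mem_kstar_char_iff]; exact ⟨k, rfl⟩



/-- Pointwise type A: heart then a row matching R. -/
def TA (R : RegularExpression σ) (f : ℕ → σ ⊕ Fin 3) (L : ℕ) : Prop :=
  2 ≤ L ∧ f 0 = heart ∧ ∃ v : ℕ → σ,
    (List.ofFn fun k : Fin (L-1) => v k) ∈ R.matches' ∧ ∀ k, k < L - 1 → f (k+1) = Sum.inl (v k)

def TB (f : ℕ → σ ⊕ Fin 3) (L : ℕ) : Prop :=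
  3 ≤ L ∧ f 0 = diamond ∧ ∀ k, 0 < k → k < L → f k = spade

def TC (C : RegularExpression σ) (f : ℕ → σ ⊕ Fin 3) (L : ℕ) : Prop :=
  2 ≤ L ∧ f (L-1) = spade ∧ ∃ v : ℕ → σ,
    (List.ofFn fun k : Fin (L-1) => v k) ∈ C.matches' ∧ ∀ k, k < L - 1 → f k = Sum.inl (v k)

def TD (f : ℕ → σ ⊕ Fin 3) (L : ℕ) : Prop :=
  3 ≤ L ∧ f (L-1) = diamond ∧ ∀ k, k < L - 1 → f k = heart

lemma totalize (v : List σ) (hv : v ≠ []) :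
    ∃ u : ℕ → σ, ∀ {L : ℕ}, L = v.length → (List.ofFn fun k : Fin L => u k) = v := by
  have h0 : 0 < v.length := List.length_pos_iff_ne_nil.2 hv
  refine ⟨fun k => if h : k < v.length then v[k] else v[0], fun {L} hL => ?_⟩
  apply List.ext_getElem (by simpa using hL)
  intro i h1 h2
  simp only [List.getElem_ofFn]
  rw [dif_pos h2]

lemma mem_E_elim {R C : RegularExpression σ} (hR : PositiveRE R) (hC : PositiveRE C)
    (f : ℕ → σ ⊕ Fin 3) (L : ℕ) (hL : 0 < L)
    (h : (List.ofFn fun k : Fin L => f k) ∈ (Eexp R C).matches') :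
    TA R f L ∨ TB f L ∨ TC C f L ∨ TD f L := by
  rw [mem_E_iff] at h
  rcases h with ⟨v, hv, he⟩ | ⟨k, he⟩ | ⟨v, hv, he⟩ | ⟨k, he⟩
  · -- type A
    have hvne : v ≠ [] := fun hn => hR (hn ▸ hv)
    have hv1 : 0 < v.length := List.length_pos_iff_ne_nil.2 hvne
    obtain ⟨u, hu⟩ := totalize v hvne
    have hLv : L = v.length + 1 := by
      have := congrArg List.length he; simpa using this
    have hfk : ∀ (k : ℕ) (hk : k < L),
        f k = (heart :: List.map Sum.inl v)[k]'(by simp; omega) := by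
      intro k hk
      have h1 : (List.ofFn fun k : Fin L => f k)[k]'(by simpa using hk) = f k := by simp
      rw [← h1]; exact List.getElem_of_eq he _
    refine Or.inl ⟨by omega, ?_, u, ?_, ?_⟩
    · rw [hfk 0 hL]; rfl
    · rw [hu (by omega)]; exact hv
    · intro k hk
      rw [hfk (k+1) (by omega)]
      simp only [List.getElem_cons_succ, List.getElem_map]
      congr 1
      have h2 : u k = v[k]'(by omega) := by
        have h3 := List.getElem_of_eq (hu (show v.length = v.length from rfl))
          (show k < (List.ofFn fun j : Fin v.length => u j).length by simpa using by omega)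
        simpa using h3
      rw [h2]
  · -- type B
    have hLv : L = k + 3 := by
      have := congrArg List.length he; simpa using this
    have hfk : ∀ (j : ℕ) (hj : j < L),
        f j = (diamond :: List.replicate (k+2) spade)[j]'(by simp; omega) := by
      intro j hj
      have h1 : (List.ofFn fun k : Fin L => f k)[j]'(by simpa using hj) = f j := by simp
      rw [← h1]; exact List.getElem_of_eq he _
    refine Or.inr (Or.inl ⟨by omega, ?_, ?_⟩)
    · rw [hfk 0 hL]; rfl
    · intro j hj0 hjL
      rw [hfk j hjL]
      obtain ⟨j, rfl⟩ : ∃ j', j = j' + 1 := ⟨j - 1, by omega⟩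
      simp only [List.getElem_cons_succ]
      rw [List.getElem_replicate]
  · -- type C
    have hvne : v ≠ [] := fun hn => hC (hn ▸ hv)
    have hv1 : 0 < v.length := List.length_pos_iff_ne_nil.2 hvne
    obtain ⟨u, hu⟩ := totalize v hvne
    have hLv : L = v.length + 1 := by
      have := congrArg List.length he; simpa using this
    have hfk : ∀ (k : ℕ) (hk : k < L),
        f k = (List.map Sum.inl v ++ [spade])[k]'(by simp; omega) := by
      intro k hk
      have h1 : (List.ofFn fun k : Fin L => f k)[k]'(by simpa using hk) = f k := by simp
      rw [← h1]; exact List.getElem_of_eq he _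
    refine Or.inr (Or.inr (Or.inl ⟨by omega, ?_, u, ?_, ?_⟩))
    · rw [hfk (L-1) (by omega), List.getElem_append_right (by simp; omega)]
      simp [hLv]
    · rw [hu (by omega)]; exact hv
    · intro k hk
      rw [hfk k (by omega), List.getElem_append_left (by simp; omega), List.getElem_map]
      congr 1
      have h2 : u k = v[k]'(by omega) := by
        have h3 := List.getElem_of_eq (hu (show v.length = v.length from rfl))
          (show k < (List.ofFn fun j : Fin v.length => u j).length by simpa using by omega)
        simpa using h3
      rw [h2]
  · -- type D
    have hLv : L = k + 3 := by
      have := congrArg List.length he; simpa using this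
    have hfk : ∀ (j : ℕ) (hj : j < L),
        f j = (List.replicate (k+2) heart ++ [diamond])[j]'(by simp; omega) := by
      intro j hj
      have h1 : (List.ofFn fun k : Fin L => f k)[j]'(by simpa using hj) = f j := by simp
      rw [← h1]; exact List.getElem_of_eq he _
    refine Or.inr (Or.inr (Or.inr ⟨by omega, ?_, ?_⟩))
    · rw [hfk (L-1) (by omega), List.getElem_append_right (by simp; omega)]
      simp [hLv]
    · intro j hj
      rw [hfk j (by omega), List.getElem_append_left (by simp; omega), List.getElem_replicate]

variable {σ : Type} {m n : ℕ} (X : Matrix (Fin m) (Fin n) σ)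

lemma rho_row_lt (i : Fin (m+1)) (hi : (i:ℕ) < m) :
    (List.ofFn fun j : Fin (n+1) => rho X i j) =
      heart :: (List.ofFn fun j : Fin n => X ⟨i, hi⟩ j).map Sum.inl := by
  apply List.ext_getElem (by simp)
  intro p h1 h2
  simp only [List.getElem_ofFn]
  match p, h2 with
  | 0, _ => simp [rho, hi]
  | p+1, h2 =>
    have hp : p < n := by simpa using h1
    simp only [List.getElem_cons_succ, List.getElem_map, List.getElem_ofFn]
    show rho X i ⟨p+1, by omega⟩ = _
    simp only [rho]
    rw [dif_pos hi, dif_neg (by simp)]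
    rfl

lemma rho_row_last (i : Fin (m+1)) (hi : ¬ (i:ℕ) < m) (hn : 2 ≤ n) :
    (List.ofFn fun j : Fin (n+1) => rho X i j) =
      diamond :: List.replicate ((n-2)+2) spade := by
  rw [show n - 2 + 2 = n by omega]
  apply List.ext_getElem (by simp)
  intro p h1 h2
  simp only [List.getElem_ofFn]
  match p, h2 with
  | 0, _ => simp [rho, hi]
  | p+1, h2 =>
    simp only [List.getElem_cons_succ, List.getElem_replicate]
    show rho X i ⟨p+1, by simpa using h1⟩ = _
    simp [rho, hi]

lemma rho_col_zero (j : Fin (n+1)) (hj : (j:ℕ) = 0) (hm : 2 ≤ m) :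
    (List.ofFn fun i : Fin (m+1) => rho X i j) =
      List.replicate ((m-2)+2) heart ++ [diamond] := by
  rw [show m - 2 + 2 = m by omega]
  apply List.ext_getElem (by simp)
  intro p h1 h2
  simp only [List.getElem_ofFn]
  by_cases hp : p < m
  · rw [List.getElem_append_left (by simpa using hp)]
    show rho X ⟨p, by omega⟩ j = _
    simp [rho, hp, hj, List.getElem_replicate]
  · have hp' : p = m := by simp at h1; omega
    rw [List.getElem_append_right (by simpa using hp)]
    show rho X ⟨p, by omega⟩ j = _
    simp [rho, hp, hj, hp']

lemma rho_col_succ (j : Fin (n+1)) (k : ℕ) (hk : k < n) (hj : (j:ℕ) = k + 1) :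
    (List.ofFn fun i : Fin (m+1) => rho X i j) =
      (List.ofFn fun i : Fin m => X i ⟨k, hk⟩).map Sum.inl ++ [spade] := by
  apply List.ext_getElem (by simp)
  intro p h1 h2
  simp only [List.getElem_ofFn]
  by_cases hp : p < m
  · rw [List.getElem_append_left (by simpa using hp)]
    simp only [List.getElem_map, List.getElem_ofFn]
    show rho X ⟨p, by omega⟩ j = _
    simp only [rho]
    rw [dif_pos (by simpa using hp), dif_neg (by omega)]
    congr 1
    · congr 1 <;> simp [hj]
  · have hp' : p = m := by simp at h1; omega
    rw [List.getElem_append_right (by simpa using hp)]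
    show rho X ⟨p, by omega⟩ j = _
    simp [rho, hp, hj]

/-- **Statement 3.** (theorem below)
-/
theorem Eexp_positive_and_crosswordExists_iff {σ : Type}
    (R C : RegularExpression σ) (hplural : Plural R C) :
    PositiveRE (Eexp R C) ∧ (CrosswordExists (Eexp R C) (Eexp R C) ↔ CrosswordExists R C) := by
  obtain ⟨hRpos, hCpos, hbig⟩ := hplural
  refine ⟨?_, ?_, ?_⟩
  · -- positivity
    intro hmem
    rw [mem_E_iff] at hmem
    rcases hmem with ⟨v, hv, he⟩ | ⟨k, he⟩ | ⟨v, hv, he⟩ | ⟨k, he⟩ <;>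
      simpa using congrArg List.length he
  · -- forward
    rintro ⟨m, n, hm, hn, X, hXr, hXc⟩
    classical
    set F : ℕ → ℕ → σ ⊕ Fin 3 :=
      fun i j => if h : i < m ∧ j < n then X ⟨i, h.1⟩ ⟨j, h.2⟩ else diamond with hF
    have hrow : ∀ i, i < m → TA R (F i) n ∨ TB (F i) n ∨ TC C (F i) n ∨ TD (F i) n := by
      intro i hi
      apply mem_E_elim hRpos hCpos _ n hn
      have he : (fun j : Fin n => F i j) = fun j : Fin n => X ⟨i, hi⟩ j := by
        funext j
        simp [hF, hi, j.is_lt]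
      rw [show (List.ofFn fun j : Fin n => F i ↑j) = List.ofFn fun j : Fin n => X ⟨i, hi⟩ j from
        congrArg List.ofFn he]
      exact hXr ⟨i, hi⟩
    have hcol : ∀ j, j < n →
        TA R (fun i => F i j) m ∨ TB (fun i => F i j) m ∨
        TC C (fun i => F i j) m ∨ TD (fun i => F i j) m := by
      intro j hj
      apply mem_E_elim hRpos hCpos _ m hm
      have he : (fun i : Fin m => F i j) = fun i : Fin m => X i ⟨j, hj⟩ := by
        funext i
        simp [hF, hj, i.is_lt]
      rw [show (List.ofFn fun i : Fin m => F ↑i j) = List.ofFn fun i : Fin m => X i ⟨j, hj⟩ from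
        congrArg List.ofFn he]
      exact hXc ⟨j, hj⟩
    -- no column starts with a spade
    have hcolfirst : ∀ j, j < n → F 0 j ≠ spade := by
      intro j hj hsp
      rcases hcol j hj with ⟨_, h0, _⟩ | ⟨_, h0, _⟩ | ⟨hL, _, v, _, hk⟩ | ⟨hL, _, hk⟩
      · have h0' : F 0 j = heart := h0
        rw [hsp] at h0'; simp [heart, spade] at h0'
      · have h0' : F 0 j = diamond := h0
        rw [hsp] at h0'; simp [diamond, spade] at h0'
      · have h0' : F 0 j = Sum.inl (v 0) := hk 0 (by omega)
        rw [hsp] at h0'; simp [spade] at h0'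
      · have h0' : F 0 j = heart := hk 0 (by omega)
        rw [hsp] at h0'; simp [heart, spade] at h0'
    rcases hrow 0 hm with hA | hB | hC0 | hD
    · -- row 0 of type A
      obtain ⟨hn2, h00, v0, hv0, hv0k⟩ := hA
      -- columns 1..n-1 are of type C
      have hcolTC : ∀ j, 1 ≤ j → j < n → TC C (fun i => F i j) m := by
        intro j h1 h2
        have htop : F 0 j = Sum.inl (v0 (j-1)) := by
          have := hv0k (j-1) (by omega)
          rwa [show (j-1)+1 = j by omega] at this
        rcases hcol j h2 with ⟨_, h0, _⟩ | ⟨_, h0, _⟩ | hc | ⟨hL, _, hk⟩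
        · have h0' : F 0 j = heart := h0
          rw [htop] at h0'; simp [heart] at h0'
        · have h0' : F 0 j = diamond := h0
          rw [htop] at h0'; simp [diamond] at h0'
        · exact hc
        · have h0' : F 0 j = heart := hk 0 (by omega)
          rw [htop] at h0'; simp [heart] at h0'
      have hm2 : 2 ≤ m := (hcolTC (n-1) (by omega) (by omega)).1
      -- all rows i < m-1 are of type A
      have hrowTA : ∀ i, i < m - 1 → TA R (F i) n := by
        intro i hi
        obtain ⟨_, _, w, _, hw⟩ := hcolTC (n-1) (by omega) (by omega)
        have hlast : F i (n-1) = Sum.inl (w i) := hw i (by omega)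
        rcases hrow i (by omega) with h | ⟨_, _, hk⟩ | ⟨_, hsp, _⟩ | ⟨_, hdi, _⟩
        · exact h
        · obtain ⟨_, _, w1, _, hw1⟩ := hcolTC 1 le_rfl (by omega)
          have h1 : F i 1 = spade := hk 1 one_pos (by omega)
          have h2 : F i 1 = Sum.inl (w1 i) := hw1 i (by omega)
          rw [h1] at h2; simp [spade] at h2
        · have hsp' : F i (n-1) = spade := hsp
          rw [hlast] at hsp'; simp [spade] at hsp'
        · have hdi' : F i (n-1) = diamond := hdi
          rw [hlast] at hdi'; simp [diamond] at hdi'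
      have hrowsel : ∀ i : Fin (m-1), ∃ v : ℕ → σ,
          (List.ofFn fun k : Fin (n-1) => v k) ∈ R.matches' ∧
          ∀ k, k < n - 1 → F i (k+1) = Sum.inl (v k) := by
        intro i
        obtain ⟨_, _, v, hv, hvk⟩ := hrowTA i i.is_lt
        exact ⟨v, hv, hvk⟩
      choose V hV1 hV2 using hrowsel
      refine ⟨m-1, n-1, by omega, by omega, fun i j => V i j, fun i => hV1 i, ?_⟩
      intro j
      obtain ⟨_, _, w, hw, hwk⟩ := hcolTC (j+1) (by omega) (by omega)
      have he : (fun i : Fin (m-1) => V i j) = fun i : Fin (m-1) => w i := by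
        funext i
        have h1 : F i (j+1) = Sum.inl (V i j) := hV2 i j j.is_lt
        have h2 : F i (j+1) = Sum.inl (w i) := hwk i i.is_lt
        rw [h1] at h2
        exact (Sum.inl_injective h2)
      rw [show (List.ofFn fun i : Fin (m-1) => V i j) = List.ofFn fun i : Fin (m-1) => w i from
        congrArg List.ofFn he]
      exact hw
    · -- row 0 of type B : impossible
      obtain ⟨hn3, _, hk⟩ := hB
      exact absurd (hk (n-1) (by omega) (by omega)) (hcolfirst (n-1) (by omega))
    · -- row 0 of type C : impossible
      obtain ⟨hn2, hsp, _⟩ := hC0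
      exact absurd hsp (hcolfirst (n-1) (by omega))
    · -- row 0 of type D
      obtain ⟨hn3, h0last, h0k⟩ := hD
      have h0last' : F 0 (n-1) = diamond := h0last
      -- column n-1 is of type B
      have hcolB : TB (fun i => F i (n-1)) m := by
        rcases hcol (n-1) (by omega) with ⟨_, h0, _⟩ | hb | ⟨hL, _, v, _, hk⟩ | ⟨hL, _, hk⟩
        · have h0' : F 0 (n-1) = heart := h0
          rw [h0last'] at h0'; simp [heart, diamond] at h0'
        · exact hb
        · have h0' : F 0 (n-1) = Sum.inl (v 0) := hk 0 (by omega)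
          rw [h0last'] at h0'; simp [diamond] at h0'
        · have h0' : F 0 (n-1) = heart := hk 0 (by omega)
          rw [h0last'] at h0'; simp [heart, diamond] at h0'
      obtain ⟨hm3, _, hspk⟩ := hcolB
      have hspk' : ∀ i, 0 < i → i < m → F i (n-1) = spade := hspk
      -- columns j < n-1 are of type A or D
      have hcolAD : ∀ j, j < n-1 → TA R (fun i => F i j) m ∨ TD (fun i => F i j) m := by
        intro j hj
        have htop : F 0 j = heart := h0k j hj
        rcases hcol j (by omega) with h | ⟨_, h0, _⟩ | ⟨hL, _, v, _, hk⟩ | h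
        · exact Or.inl h
        · have h0' : F 0 j = diamond := h0
          rw [htop] at h0'; simp [heart, diamond] at h0'
        · have h0' : F 0 j = Sum.inl (v 0) := hk 0 (by omega)
          rw [htop] at h0'; simp [heart] at h0'
        · exact Or.inr h
      -- rows 1..m-1 are of type C
      have hrowTC : ∀ i, 1 ≤ i → i < m → TC C (F i) n := by
        intro i h1 h2
        have hlast : F i (n-1) = spade := hspk' i h1 h2
        rcases hrow i h2 with ⟨_, _, v, _, hk⟩ | ⟨_, _, hk⟩ | h | ⟨_, hdi, _⟩
        · have hv' : F i (n-1) = Sum.inl (v (n-2)) := by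
            have := hk (n-2) (by omega)
            rwa [show n-2+1 = n-1 by omega] at this
          rw [hlast] at hv'; simp [spade] at hv'
        · have hs : F i 1 = spade := hk 1 one_pos (by omega)
          rcases hcolAD 1 (by omega) with ⟨_, _, v, _, hvk⟩ | ⟨_, hdl, hhk⟩
          · have hv' : F i 1 = Sum.inl (v (i-1)) := by
              have := hvk (i-1) (by omega)
              rwa [show i-1+1 = i by omega] at this
            rw [hs] at hv'; simp [spade] at hv'
          · by_cases him : i < m-1
            · have hh : F i 1 = heart := hhk i him
              rw [hs] at hh; simp [heart, spade] at hh
            · have hdl' : F (m-1) 1 = diamond := hdl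
              rw [show m-1 = i by omega] at hdl'
              rw [hs] at hdl'; simp [diamond, spade] at hdl'
        · exact h
        · have hdi' : F i (n-1) = diamond := hdi
          rw [hlast] at hdi'; simp [diamond, spade] at hdi'
      -- columns j < n-1 are of type A
      have hcolTA : ∀ j, j < n-1 → TA R (fun i => F i j) m := by
        intro j hj
        rcases hcolAD j hj with h | ⟨_, _, hhk⟩
        · exact h
        · obtain ⟨_, _, w, _, hwk⟩ := hrowTC 1 le_rfl (by omega)
          have h1 : F 1 j = Sum.inl (w j) := hwk j hj
          have h2 : F 1 j = heart := hhk 1 (by omega)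
          rw [h1] at h2; simp [heart] at h2
      have hrowsel : ∀ i : Fin (m-1), ∃ w : ℕ → σ,
          (List.ofFn fun k : Fin (n-1) => w k) ∈ C.matches' ∧
          ∀ k, k < n - 1 → F (i+1) k = Sum.inl (w k) := by
        intro i
        obtain ⟨_, _, w, hw, hwk⟩ := hrowTC (i+1) (by omega) (by omega)
        exact ⟨w, hw, hwk⟩
      choose W hW1 hW2 using hrowsel
      refine ⟨n-1, m-1, by omega, by omega, fun p q => W q p, ?_, fun q => hW1 q⟩
      intro p
      obtain ⟨_, _, v, hv, hvk⟩ := hcolTA p p.is_lt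
      have he : (fun q : Fin (m-1) => W q p) = fun q : Fin (m-1) => v q := by
        funext q
        have h1 : F (q+1) p = Sum.inl (W q p) := hW2 q p p.is_lt
        have h2 : F (q+1) p = Sum.inl (v q) := by
          have := hvk q q.is_lt
          rwa [show (q:ℕ)+1 = (q:ℕ)+1 from rfl] at this
        rw [h1] at h2
        exact (Sum.inl_injective h2)
      rw [show (List.ofFn fun q : Fin (m-1) => W q p) = List.ofFn fun q : Fin (m-1) => v q from
        congrArg List.ofFn he]
      exact hv
  · -- backward
    rintro ⟨m, n, hm, hn, X, hXr, hXc⟩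
    obtain ⟨hm2, hn2⟩ := hbig m n X hm hn ⟨hXr, hXc⟩
    refine ⟨m+1, n+1, by omega, by omega, rho X, ?_, ?_⟩
    · intro i
      by_cases hi : (i:ℕ) < m
      · rw [rho_row_lt X i hi, mem_E_iff]
        exact Or.inl ⟨_, hXr ⟨i, hi⟩, rfl⟩
      · rw [rho_row_last X i hi hn2, mem_E_iff]
        exact Or.inr (Or.inl ⟨n-2, rfl⟩)
    · intro j
      by_cases hj : (j:ℕ) = 0
      · rw [rho_col_zero X j hj hm2, mem_E_iff]
        exact Or.inr (Or.inr (Or.inr ⟨m-2, rfl⟩))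
      · obtain ⟨k, hk, hjk⟩ : ∃ k, k < n ∧ (j:ℕ) = k + 1 :=
          ⟨(j:ℕ) - 1, by have := j.is_lt; omega, by omega⟩
        rw [rho_col_succ X j k hk hjk, mem_E_iff]
        exact Or.inr (Or.inr (Or.inl ⟨_, hXc ⟨k, hk⟩, rfl⟩))

end RegexCrossword
end

section
/- Let Σ be an alphabet and let R and C be positive regular expressions over Σ such that (R,C) is plural. The map ρ, sending an m×n Σ-crossword X (with m, n ≥ 2) to the (m+1)×(n+1) Σ'-crossword obtained from X by prepending a new leftmost column consisting of m copies of ♥ and then appending a new bottom row consisting of ♦ followed by n copies of ♠, is injective, and whenever X is an (R,C)-crossword, ρ(X) is an (E,E)-crossword. -/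
namespace RegexCrossword

open RegularExpression

lemma replicate_mem_star_char {σ : Type} (k : ℕ) (a : σ) :
    List.replicate k a ∈ (char a).star.matches' := by
  rw [matches'_star, Language.mem_kstar]
  exact ⟨List.replicate k [a], by simp, by
    intro y hy; rw [matches'_char]; exact List.eq_of_mem_replicate hy⟩

lemma single_mem_char {σ : Type} (a : σ) : [a] ∈ (char a).matches' := by
  rw [matches'_char]; rfl

lemma map_mem_map {σ τ : Type} (f : σ → τ) (P : RegularExpression σ) {w : List σ}
    (h : w ∈ P.matches') : List.map f w ∈ (P.map f).matches' := by
  rw [matches'_map]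
  exact ⟨w, h, rfl⟩

/-- Let `R` and `C` be positive regular expressions over `σ`
with `(R, C)` plural.  The map `ρ` (on `m × n` crosswords with `m, n ≥ 2`) is
injective, and it takes every `(R,C)`-crossword to an `(E,E)`-crossword. -/
theorem rho_injective_and_maps_crosswords {σ : Type}
    (R C : RegularExpression σ) (hplural : Plural R C) :
    (∀ m n : ℕ, 2 ≤ m → 2 ≤ n →
      Function.Injective fun X : Matrix (Fin m) (Fin n) σ => rho X) ∧
    (∀ (m n : ℕ) (X : Matrix (Fin m) (Fin n) σ), 0 < m → 0 < n →
      IsCrossword R C X → IsCrossword (Eexp R C) (Eexp R C) (rho X)) := by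
  constructor
  · intro m n _ _ X Y h
    ext i j
    have := congrFun (congrFun h (⟨i, by omega⟩ : Fin (m + 1)))
      (⟨(j : ℕ) + 1, by omega⟩ : Fin (n + 1))
    simp only [rho] at this
    rw [dif_pos i.isLt, dif_pos i.isLt, dif_neg (by simp), dif_neg (by simp)] at this
    simpa using this
  · intro m n X hm hn hX
    obtain ⟨hm2, hn2⟩ := hplural.2.2 m n X hm hn hX
    constructor
    · -- rows
      intro i
      by_cases hi : (i : ℕ) < m
      · -- normal row: ♥ followed by row i of X
        have hrow : (List.ofFn fun j => rho X i j) =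
            heart :: List.map Sum.inl (List.ofFn fun j => X ⟨i, hi⟩ j) := by
          rw [List.ofFn_succ, List.map_ofFn]
          congr 1
          · simp [rho, hi]
          · refine congrArg List.ofFn (funext fun t => ?_)
            simp [rho, hi, Function.comp]
        rw [hrow]
        apply Or.inl
        apply Or.inl
        rw [matches'_mul]; refine Language.mem_mul.mpr ?_
        exact ⟨[heart], single_mem_char _, _, map_mem_map Sum.inl R (hX.1 ⟨i, hi⟩), rfl⟩
      · -- last row: ♦ followed by n spades
        have hrow : (List.ofFn fun j => rho X i j) =
            diamond :: List.replicate n spade := by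
          rw [List.ofFn_succ]
          congr 1
          · simp [rho, hi]
          · rw [← List.ofFn_const n spade]
            refine congrArg List.ofFn (funext fun t => ?_)
            simp [rho, hi]
        obtain ⟨k, rfl⟩ : ∃ k, n = k + 2 := ⟨n - 2, by omega⟩
        rw [hrow]
        apply Or.inl
        apply Or.inr
        rw [matches'_mul]; refine Language.mem_mul.mpr ?_
        refine ⟨[diamond, spade, spade], ?_, List.replicate k spade,
          replicate_mem_star_char k spade, by simp [List.replicate_succ]⟩
        rw [matches'_mul, Language.mem_mul]
        refine ⟨[diamond, spade], ?_, [spade], single_mem_char _, rfl⟩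
        rw [matches'_mul, Language.mem_mul]
        exact ⟨[diamond], single_mem_char _, [spade], single_mem_char _, rfl⟩
    · -- columns
      intro j
      by_cases hj : (j : ℕ) = 0
      · -- first column: m hearts then ♦
        have hcol : (List.ofFn fun i => rho X i j) =
            List.replicate m heart ++ [diamond] := by
          rw [List.ofFn_succ', List.concat_eq_append]
          congr 1
          · rw [← List.ofFn_const m heart]
            refine congrArg List.ofFn (funext fun t => ?_)
            simp [rho, t.isLt, hj]
          · simp [rho, hj]
        obtain ⟨k, rfl⟩ : ∃ k, m = k + 2 := ⟨m - 2, by omega⟩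
        rw [hcol]
        apply Or.inr
        apply Or.inr
        rw [matches'_mul]; refine Language.mem_mul.mpr ?_
        refine ⟨List.replicate (k + 2) heart, ?_, [diamond], single_mem_char _, rfl⟩
        rw [matches'_mul, Language.mem_mul]
        refine ⟨[heart, heart], ?_, List.replicate k heart,
          replicate_mem_star_char k heart, by simp [List.replicate_succ]⟩
        rw [matches'_mul, Language.mem_mul]
        exact ⟨[heart], single_mem_char _, [heart], single_mem_char _, rfl⟩
      · -- other columns: column of X then ♠
        have hjlt : (j : ℕ) - 1 < n := by have := j.isLt; omega
        have hcol : (List.ofFn fun i => rho X i j) =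
            List.map Sum.inl (List.ofFn fun i => X i ⟨(j : ℕ) - 1, hjlt⟩) ++ [spade] := by
          rw [List.ofFn_succ', List.concat_eq_append, List.map_ofFn]
          congr 1
          · refine congrArg List.ofFn (funext fun t => ?_)
            simp [rho, t.isLt, hj, Function.comp]
          · simp [rho, hj]
        rw [hcol]
        apply Or.inr
        apply Or.inl
        rw [matches'_mul]; refine Language.mem_mul.mpr ?_
        exact ⟨_, map_mem_map Sum.inl C (hX.2 ⟨(j : ℕ) - 1, hjlt⟩), [spade],
          single_mem_char _, rfl⟩

end RegexCrossword
end

section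
/- Let Σ be an alphabet and let R and C be positive regular expressions over Σ such that (R,C) is plural. Then for every (E,E)-crossword Y there exists an (R,C)-crossword X such that ρ(X) equals Y or ρ(X) equals the matrix transpose of Y. -/
namespace RegexCrossword

open RegularExpression

variable {σ : Type}

lemma mem_star_char {α : Type} (a : α) {w : List α}
    (h : w ∈ ((char a).star).matches') : ∃ k, w = List.replicate k a := by
  rw [matches'_star, Language.mem_kstar] at h
  obtain ⟨L, rfl, hL⟩ := h
  induction L with
  | nil => exact ⟨0, rfl⟩
  | cons y L ih =>
    obtain ⟨k, hk⟩ := ih (fun y hy => hL y (List.mem_cons_of_mem _ hy))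
    have hy : y = [a] := hL y List.mem_cons_self
    exact ⟨k + 1, by simp [hy, hk, List.replicate_succ]⟩

lemma ofFn_eq_get {α : Type} {L : ℕ} {f : Fin L → α} {l : List α} (h : List.ofFn f = l)
    (j : Fin L) : f j = l[(j : ℕ)]'(by rw [← h]; simp) := by
  subst h; simp

/-- Shape `♥w`, `w ∈ R`. -/
def ShapeR1 (R : RegularExpression σ) (L : ℕ) (f : Fin L → σ ⊕ Fin 3) : Prop :=
  2 ≤ L ∧ (∀ j : Fin L, (j : ℕ) = 0 → f j = heart) ∧
    (∀ j : Fin L, 0 < (j : ℕ) → ∃ a : σ, f j = Sum.inl a) ∧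
    ∀ g : Fin (L - 1) → σ,
      (∀ j : Fin (L - 1), f ⟨(j : ℕ) + 1, by have := j.isLt; omega⟩ = Sum.inl (g j)) →
      List.ofFn g ∈ R.matches'

/-- Shape `♦♠♠♠…`. -/
def ShapeR2 (L : ℕ) (f : Fin L → σ ⊕ Fin 3) : Prop :=
  3 ≤ L ∧ (∀ j : Fin L, (j : ℕ) = 0 → f j = diamond) ∧
    ∀ j : Fin L, 0 < (j : ℕ) → f j = spade

/-- Shape `w♠`, `w ∈ C`. -/
def ShapeC1 (C : RegularExpression σ) (L : ℕ) (f : Fin L → σ ⊕ Fin 3) : Prop :=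
  2 ≤ L ∧ (∀ j : Fin L, (j : ℕ) < L - 1 → ∃ a : σ, f j = Sum.inl a) ∧
    (∀ j : Fin L, (j : ℕ) = L - 1 → f j = spade) ∧
    ∀ g : Fin (L - 1) → σ,
      (∀ j : Fin (L - 1), f ⟨(j : ℕ), by have := j.isLt; omega⟩ = Sum.inl (g j)) →
      List.ofFn g ∈ C.matches'

/-- Shape `♥♥…♥♦`. -/
def ShapeC2 (L : ℕ) (f : Fin L → σ ⊕ Fin 3) : Prop :=
  3 ≤ L ∧ (∀ j : Fin L, (j : ℕ) < L - 1 → f j = heart) ∧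
    ∀ j : Fin L, (j : ℕ) = L - 1 → f j = diamond

lemma decodeE {R C : RegularExpression σ} (hR : PositiveRE R) (hC : PositiveRE C)
    {L : ℕ} {f : Fin L → σ ⊕ Fin 3} (hf : List.ofFn f ∈ (Eexp R C).matches') :
    ShapeR1 R L f ∨ ShapeR2 L f ∨ ShapeC1 C L f ∨ ShapeC2 L f := by
  rw [Eexp, matches'_add, Language.mem_add, Rext, Cext, matches'_add, matches'_add,
    Language.mem_add, Language.mem_add] at hf
  rcases hf with (h | h) | (h | h)
  · -- ♥R
    left
    rw [matches'_mul, Language.mem_mul] at h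
    obtain ⟨a, ha, b, hb, hab⟩ := h
    rw [matches'_char] at ha
    replace ha : a = [heart] := ha
    rw [matches'_map] at hb
    obtain ⟨u, hu, rfl⟩ := hb
    have hne : u ≠ [] := by rintro rfl; exact hR hu
    have key : List.ofFn f = heart :: List.map Sum.inl u := by rw [← hab, ha]; rfl
    have hL : L = u.length + 1 := by
      have := congrArg List.length key; simpa using this
    have hul : 1 ≤ u.length := by
      cases u with | nil => exact absurd rfl hne | cons x l => simp
    have hget := ofFn_eq_get key
    refine ⟨by omega, ?_, ?_, ?_⟩
    · intro j hj
      rw [hget j]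
      simp [hj]
    · intro j hj
      obtain ⟨j', hj'⟩ : ∃ j', (j : ℕ) = j' + 1 := ⟨(j : ℕ) - 1, by omega⟩
      rw [hget j]
      refine ⟨u[j']'(by have := j.isLt; omega), ?_⟩
      simp [hj']
    · intro g hg
      have : List.ofFn g = u := by
        apply List.ext_getElem (by simp; omega)
        intro k h1 h2
        have h3 := hg ⟨k, by simpa using h1⟩
        rw [hget _] at h3
        simp at h3
        simp only [List.getElem_ofFn]
        exact h3.symm
      rw [this]; exact hu
  · -- ♦♠♠♠*
    right; left
    rw [matches'_mul, Language.mem_mul] at h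
    obtain ⟨a, ha, b, hb, hab⟩ := h
    obtain ⟨k, rfl⟩ := mem_star_char _ hb
    rw [matches'_mul, Language.mem_mul] at ha
    obtain ⟨a2, ha2, b2, hb2, hab2⟩ := ha
    rw [matches'_mul, Language.mem_mul] at ha2
    obtain ⟨a3, ha3, b3, hb3, hab3⟩ := ha2
    rw [matches'_char] at ha3 hb3 hb2
    replace ha3 : a3 = [diamond] := ha3
    replace hb3 : b3 = [spade] := hb3
    replace hb2 : b2 = [spade] := hb2
    subst ha3 hb3 hb2
    have key : List.ofFn f = diamond :: List.replicate (k + 2) (spade (σ := σ)) := by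
      rw [← hab, ← hab2, ← hab3]
      simp [List.replicate_succ]
    have hL : L = k + 3 := by
      have := congrArg List.length key; simpa using this
    have hget := ofFn_eq_get key
    refine ⟨by omega, ?_, ?_⟩
    · intro j hj; rw [hget j]; simp [hj]
    · intro j hj
      obtain ⟨j', hj'⟩ : ∃ j', (j : ℕ) = j' + 1 := ⟨(j : ℕ) - 1, by omega⟩
      rw [hget j]
      simp [hj', List.getElem_replicate]
  · -- C♠
    right; right; left
    rw [matches'_mul, Language.mem_mul] at h
    obtain ⟨a, ha, b, hb, hab⟩ := h
    rw [matches'_char] at hb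
    replace hb : b = [spade] := hb
    rw [matches'_map] at ha
    obtain ⟨u, hu, rfl⟩ := ha
    have hne : u ≠ [] := by rintro rfl; exact hC hu
    have key : List.ofFn f = List.map Sum.inl u ++ [spade] := by rw [← hab, hb]
    have hL : L = u.length + 1 := by
      have := congrArg List.length key; simpa using this
    have hget := ofFn_eq_get key
    have hul : 1 ≤ u.length := by
      cases u with | nil => exact absurd rfl hne | cons x l => simp
    refine ⟨by omega, ?_, ?_, ?_⟩
    · intro j hj
      rw [hget j]
      refine ⟨u[(j : ℕ)]'(by omega), ?_⟩
      rw [List.getElem_append_left (by simpa using by omega : (j:ℕ) < (List.map Sum.inl u).length)]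
      simp
    · intro j hj
      rw [hget j]
      have : (j : ℕ) = (List.map (Sum.inl (β := Fin 3)) u).length := by simpa using by omega
      simp [this, List.getElem_concat_length]
    · intro g hg
      have : List.ofFn g = u := by
        apply List.ext_getElem (by simp; omega)
        intro m h1 h2
        have h3 := hg ⟨m, by simpa using h1⟩
        rw [hget _] at h3
        rw [List.getElem_append_left (by simpa using by omega)] at h3
        simp at h3
        simp only [List.getElem_ofFn]
        exact h3.symm
      rw [this]; exact hu
  · -- ♥♥♥*♦
    right; right; right
    rw [matches'_mul, Language.mem_mul] at h
    obtain ⟨a, ha, b, hb, hab⟩ := h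
    rw [matches'_char] at hb
    replace hb : b = [diamond] := hb
    rw [matches'_mul, Language.mem_mul] at ha
    obtain ⟨a2, ha2, b2, hb2, hab2⟩ := ha
    obtain ⟨k, rfl⟩ := mem_star_char _ hb2
    rw [matches'_mul, Language.mem_mul] at ha2
    obtain ⟨a3, ha3, b3, hb3, hab3⟩ := ha2
    rw [matches'_char] at ha3 hb3
    replace ha3 : a3 = [heart] := ha3
    replace hb3 : b3 = [heart] := hb3
    subst ha3 hb3 hb
    have key : List.ofFn f = List.replicate (k + 2) (heart (σ := σ)) ++ [diamond] := by
      rw [← hab, ← hab2, ← hab3]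
      simp [List.replicate_succ]
    have hL : L = k + 3 := by
      have := congrArg List.length key; simpa using this
    have hget := ofFn_eq_get key
    refine ⟨by omega, ?_, ?_⟩
    · intro j hj
      rw [hget j]
      rw [List.getElem_append_left (by simp; omega)]
      simp
    · intro j hj
      rw [hget j]
      have : (j : ℕ) = (List.replicate (k + 2) (heart (σ := σ))).length := by simp; omega
      simp [this, List.getElem_concat_length]



lemma inr_ne {a b : Fin 3} (h : a ≠ b) : (Sum.inr a : σ ⊕ Fin 3) ≠ Sum.inr b :=
  fun he => h (Sum.inr_injective he)

lemma heart_ne_diamond : (heart : σ ⊕ Fin 3) ≠ diamond := inr_ne (by decide)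
lemma heart_ne_spade : (heart : σ ⊕ Fin 3) ≠ spade := inr_ne (by decide)
lemma diamond_ne_spade : (diamond : σ ⊕ Fin 3) ≠ spade := inr_ne (by decide)
lemma inl_ne_heart (a : σ) : (Sum.inl a : σ ⊕ Fin 3) ≠ heart := by simp [heart]
lemma inl_ne_spade (a : σ) : (Sum.inl a : σ ⊕ Fin 3) ≠ spade := by simp [spade]
lemma inl_ne_diamond (a : σ) : (Sum.inl a : σ ⊕ Fin 3) ≠ diamond := by simp [diamond]

lemma main_case (R C : RegularExpression σ) (hplural : Plural R C)
    (p q : ℕ)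
    (Y : Matrix (Fin (p + 1)) (Fin (q + 1)) (σ ⊕ Fin 3))
    (hY : IsCrossword (Eexp R C) (Eexp R C) Y)
    (hd : Y ⟨p, by omega⟩ ⟨0, by omega⟩ = diamond) :
    0 < p ∧ 0 < q ∧ ∃ X : Matrix (Fin p) (Fin q) σ, IsCrossword R C X ∧ rho X = Y := by
  obtain ⟨hR, hC, hmin⟩ := hplural
  have hrow := fun i : Fin (p+1) => decodeE hR hC (hY.1 i)
  have hcol := fun j : Fin (q+1) => decodeE hR hC (hY.2 j)
  have hYeq : ∀ (i i' : Fin (p+1)) (j j' : Fin (q+1)),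
      (i : ℕ) = (i' : ℕ) → (j : ℕ) = (j' : ℕ) → Y i j = Y i' j' := by
    intro i i' j j' h1 h2
    congr 1 <;> exact Fin.ext ‹_›
  -- column 0 is shape C2
  have hcol0C2 : ShapeC2 (p+1) (fun i => Y i ⟨0, by omega⟩) := by
    rcases hcol ⟨0, by omega⟩ with h | h | h | h
    · obtain ⟨a, ha⟩ := h.2.2.1 ⟨p, by omega⟩ (by have := h.1; simpa using by omega)
      exact absurd (ha.symm.trans hd) (inl_ne_diamond a)
    · have := h.2.2 ⟨p, by omega⟩ (by have := h.1; simpa using by omega)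
      exact absurd (this.symm.trans hd) (fun he => diamond_ne_spade he.symm)
    · have := h.2.2.1 ⟨p, by omega⟩ (by simp)
      exact absurd (this.symm.trans hd) (fun he => diamond_ne_spade he.symm)
    · exact h
  have hp2 : 2 ≤ p := by have := hcol0C2.1; omega
  have hq1 : 1 ≤ q := by
    rcases hrow ⟨0, by omega⟩ with h | h | h | h <;> (have := h.1; omega)
  have hY0left : ∀ i : Fin (p+1), (i : ℕ) < p → Y i ⟨0, by omega⟩ = heart :=
    fun i hi => hcol0C2.2.1 i (by simpa using hi)
  -- rows with index < p are shape R1 or C2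
  have rowRC : ∀ i : Fin (p+1), (i : ℕ) < p →
      ShapeR1 R (q+1) (fun j => Y i j) ∨ ShapeC2 (q+1) (fun j => Y i j) := by
    intro i hi
    have hih := hY0left i hi
    rcases hrow i with h | h | h | h
    · exact Or.inl h
    · have := h.2.1 ⟨0, by omega⟩ rfl
      exact absurd (this.symm.trans hih) (fun he => heart_ne_diamond he.symm)
    · obtain ⟨a, ha⟩ := h.2.1 ⟨0, by omega⟩ (by simpa using by omega)
      exact absurd (ha.symm.trans hih) (inl_ne_heart a)
    · exact Or.inr h
  -- row 0 is shape R1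
  have hrow0R1 : ShapeR1 R (q+1) (fun j => Y ⟨0, by omega⟩ j) := by
    rcases rowRC ⟨0, by omega⟩ (by simp; omega) with h | h
    · exact h
    · -- row 0 ends with diamond, so column q is shape R2
      exfalso
      have hlast : Y ⟨0, by omega⟩ ⟨q, by omega⟩ = diamond :=
        h.2.2 ⟨q, by omega⟩ (by simp)
      have hcolqR2 : ShapeR2 (p+1) (fun i => Y i ⟨q, by omega⟩) := by
        rcases hcol ⟨q, by omega⟩ with h' | h' | h' | h'
        · have := h'.2.1 ⟨0, by omega⟩ rfl
          exact absurd (this.symm.trans hlast) heart_ne_diamond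
        · exact h'
        · obtain ⟨a, ha⟩ := h'.2.1 ⟨0, by omega⟩ (by simpa using by omega)
          exact absurd (ha.symm.trans hlast) (inl_ne_diamond a)
        · have := h'.2.1 ⟨0, by omega⟩ (by simpa using by omega)
          exact absurd (this.symm.trans hlast) heart_ne_diamond
      -- row 1 ends with spade, contradiction
      have h1s : Y ⟨1, by omega⟩ ⟨q, by omega⟩ = spade :=
        hcolqR2.2.2 ⟨1, by omega⟩ (by simp)
      rcases rowRC ⟨1, by omega⟩ (by simp; omega) with h' | h'
      · obtain ⟨a, ha⟩ := h'.2.2.1 ⟨q, by omega⟩ (by simpa using by omega)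
        exact absurd (ha.symm.trans h1s) (inl_ne_spade a)
      · have := h'.2.2 ⟨q, by omega⟩ (by simp)
        exact absurd (this.symm.trans h1s) (fun he => diamond_ne_spade he)
  -- all columns with index ≥ 1 are shape C1
  have hcolC1 : ∀ j : Fin (q+1), 0 < (j : ℕ) → ShapeC1 C (p+1) (fun i => Y i j) := by
    intro j hj
    obtain ⟨a, ha⟩ := hrow0R1.2.2.1 j hj
    rcases hcol j with h | h | h | h
    · have := h.2.1 ⟨0, by omega⟩ rfl
      exact absurd (this.symm.trans ha) (fun he => (inl_ne_heart a) he.symm)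
    · have := h.2.1 ⟨0, by omega⟩ rfl
      exact absurd (this.symm.trans ha) (fun he => (inl_ne_diamond a) he.symm)
    · exact h
    · have := h.2.1 ⟨0, by omega⟩ (by simpa using by omega)
      exact absurd (this.symm.trans ha) (fun he => (inl_ne_heart a) he.symm)
  -- all rows with index < p are shape R1
  have hrowR1 : ∀ i : Fin (p+1), (i : ℕ) < p → ShapeR1 R (q+1) (fun j => Y i j) := by
    intro i hi
    rcases rowRC i hi with h | h
    · exact h
    · exfalso
      obtain ⟨a, ha⟩ := (hcolC1 ⟨q, by omega⟩ (lt_of_lt_of_le Nat.zero_lt_one hq1)).2.1 i (by simpa using hi)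
      have := h.2.2 ⟨q, by omega⟩ (by simp)
      exact absurd (this.symm.trans ha) (fun he => (inl_ne_diamond a) he.symm)
  -- build X
  have hinl : ∀ (i : Fin p) (j : Fin q), ∃ a : σ,
      Y ⟨(i : ℕ), by omega⟩ ⟨(j : ℕ) + 1, by omega⟩ = Sum.inl a := by
    intro i j
    exact (hrowR1 ⟨(i : ℕ), by omega⟩ (by simpa using i.isLt)).2.2.1
      ⟨(j : ℕ) + 1, by omega⟩ (by simp)
  choose X hX using hinl
  refine ⟨by omega, by omega, X, ⟨?_, ?_⟩, ?_⟩
  · intro i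
    exact (hrowR1 ⟨(i : ℕ), by omega⟩ (by simpa using i.isLt)).2.2.2
      (fun j => X i j) (fun j => hX i j)
  · intro j
    exact (hcolC1 ⟨(j : ℕ) + 1, by omega⟩ (by simp)).2.2.2
      (fun i => X i j) (fun i => hX i j)
  · funext i j
    by_cases hi : (i : ℕ) < p
    · by_cases hj : (j : ℕ) = 0
      · have h1 : rho X i j = heart := by simp [rho, hi, hj]
        have h2 : Y i j = heart :=
          (hYeq i i j ⟨0, by omega⟩ rfl hj).trans (hY0left i hi)
        rw [h1, h2]
      · have h1 : rho X i j = Sum.inl (X ⟨(i : ℕ), hi⟩ ⟨(j : ℕ) - 1, by have := j.isLt; omega⟩) := by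
          simp [rho, hi, hj]
        have h2 := hX ⟨(i : ℕ), hi⟩ ⟨(j : ℕ) - 1, by have := j.isLt; omega⟩
        have h3 : Y i j = Sum.inl (X ⟨(i : ℕ), hi⟩ ⟨(j : ℕ) - 1, by have := j.isLt; omega⟩) :=
          (hYeq i ⟨(i : ℕ), by omega⟩ j ⟨(j : ℕ) - 1 + 1, by have := j.isLt; omega⟩ rfl
            (by simp; omega)).trans h2
        rw [h1, h3]
    · have hip : (i : ℕ) = p := by have := i.isLt; omega
      by_cases hj : (j : ℕ) = 0
      · have h1 : rho X i j = diamond := by simp [rho, hi, hj]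
        have h2 : Y i j = diamond :=
          (hYeq i ⟨p, by omega⟩ j ⟨0, by omega⟩ hip hj).trans hd
        rw [h1, h2]
      · have h1 : rho X i j = spade := by simp [rho, hi, hj]
        have h2 : Y i j = spade :=
          (hYeq i ⟨p, by omega⟩ j j hip rfl).trans
            ((hcolC1 j (by omega)).2.2.1 ⟨p, by omega⟩ (by simp))
        rw [h1, h2]

lemma corner (R C : RegularExpression σ) (hplural : Plural R C)
    (p q : ℕ)
    (Y : Matrix (Fin (p + 1)) (Fin (q + 1)) (σ ⊕ Fin 3))
    (hY : IsCrossword (Eexp R C) (Eexp R C) Y) :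
    Y ⟨p, by omega⟩ ⟨0, by omega⟩ = diamond ∨ Y ⟨0, by omega⟩ ⟨q, by omega⟩ = diamond := by
  obtain ⟨hR, hC, hmin⟩ := hplural
  by_contra hcon
  push_neg at hcon
  obtain ⟨hd1, hd2⟩ := hcon
  have hrow := fun i : Fin (p+1) => decodeE hR hC (hY.1 i)
  have hcol := fun j : Fin (q+1) => decodeE hR hC (hY.2 j)
  have hYeq : ∀ (i i' : Fin (p+1)) (j j' : Fin (q+1)),
      (i : ℕ) = (i' : ℕ) → (j : ℕ) = (j' : ℕ) → Y i j = Y i' j' := by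
    intro i i' j j' h1 h2
    congr 1 <;> exact Fin.ext ‹_›
  have hp1 : 1 ≤ p := by
    rcases hcol ⟨0, by omega⟩ with h | h | h | h <;> (have := h.1; omega)
  have hq1 : 1 ≤ q := by
    rcases hrow ⟨0, by omega⟩ with h | h | h | h <;> (have := h.1; omega)
  rcases hcol ⟨0, by omega⟩ with hc0 | hc0 | hc0 | hc0
  · -- column 0 is ♥R : the two-R1 case, contradiction with plurality
    have hY00 : Y ⟨0, by omega⟩ ⟨0, by omega⟩ = heart := hc0.2.1 ⟨0, by omega⟩ rfl
    -- row 0 is R1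
    have hrow0 : ShapeR1 R (q+1) (fun j => Y ⟨0, by omega⟩ j) := by
      rcases hrow ⟨0, by omega⟩ with h | h | h | h
      · exact h
      · have := h.2.1 ⟨0, by omega⟩ rfl
        exact absurd (this.symm.trans hY00) (fun he => heart_ne_diamond he.symm)
      · obtain ⟨a, ha⟩ := h.2.1 ⟨0, by omega⟩ (by simp; omega)
        exact absurd (ha.symm.trans hY00) (inl_ne_heart a)
      · exact absurd (h.2.2 ⟨q, by omega⟩ (by simp)) hd2
    -- every row with index ≥ 1 is C1
    have rowC1 : ∀ i : Fin (p+1), 0 < (i : ℕ) → ShapeC1 C (q+1) (fun j => Y i j) := by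
      intro i hi
      obtain ⟨a, ha⟩ := hc0.2.2.1 i hi
      rcases hrow i with h | h | h | h
      · have := h.2.1 ⟨0, by omega⟩ rfl
        exact absurd (this.symm.trans ha) (fun he => (inl_ne_heart a) he.symm)
      · have := h.2.1 ⟨0, by omega⟩ rfl
        exact absurd (this.symm.trans ha) (fun he => (inl_ne_diamond a) he.symm)
      · exact h
      · have := h.2.1 ⟨0, by omega⟩ (by simp; omega)
        exact absurd (this.symm.trans ha) (fun he => (inl_ne_heart a) he.symm)
    -- every column with index ≥ 1 is C1
    have colC1 : ∀ j : Fin (q+1), 0 < (j : ℕ) → ShapeC1 C (p+1) (fun i => Y i j) := by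
      intro j hj
      obtain ⟨a, ha⟩ := hrow0.2.2.1 j hj
      rcases hcol j with h | h | h | h
      · have := h.2.1 ⟨0, by omega⟩ rfl
        exact absurd (this.symm.trans ha) (fun he => (inl_ne_heart a) he.symm)
      · have := h.2.1 ⟨0, by omega⟩ rfl
        exact absurd (this.symm.trans ha) (fun he => (inl_ne_diamond a) he.symm)
      · exact h
      · have := h.2.1 ⟨0, by omega⟩ (by simp; omega)
        exact absurd (this.symm.trans ha) (fun he => (inl_ne_heart a) he.symm)
    -- q = 1
    have hq : q = 1 := by
      by_contra hq2
      obtain ⟨a, ha⟩ := (rowC1 ⟨p, by omega⟩ (by simp; omega)).2.1 ⟨1, by omega⟩ (by simp; omega)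
      have := (colC1 ⟨1, by omega⟩ (by simp)).2.2.1 ⟨p, by omega⟩ (by simp)
      exact absurd (this.symm.trans ha) (fun he => (inl_ne_spade a) he.symm)
    have hp : p = 1 := by
      by_contra hp2
      obtain ⟨a, ha⟩ := (colC1 ⟨q, by omega⟩ (by simp; omega)).2.1 ⟨1, by omega⟩ (by simp; omega)
      have := (rowC1 ⟨1, by omega⟩ (by simp)).2.2.1 ⟨q, by omega⟩ (by simp)
      exact absurd (this.symm.trans ha) (fun he => (inl_ne_spade a) he.symm)
    subst hq; subst hp
    -- build a 1×1 crossword, contradicting plurality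
    obtain ⟨a, ha⟩ := hrow0.2.2.1 ⟨1, by omega⟩ (by simp)
    have hXrow : (List.ofFn fun _ : Fin 1 => a) ∈ R.matches' := by
      refine hrow0.2.2.2 (fun _ => a) ?_
      intro j
      have hj : (j : ℕ) = 0 := by omega
      exact (hYeq ⟨0, by omega⟩ ⟨0, by omega⟩ ⟨(j : ℕ) + 1, by omega⟩ ⟨1, by omega⟩ rfl
        (by simp)).trans ha
    have hXcol : (List.ofFn fun _ : Fin 1 => a) ∈ C.matches' := by
      refine (colC1 ⟨1, by omega⟩ (by simp)).2.2.2 (fun _ => a) ?_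
      intro i
      have hi : (i : ℕ) = 0 := by omega
      exact (hYeq ⟨(i : ℕ), by omega⟩ ⟨0, by omega⟩ ⟨1, by omega⟩ ⟨1, by omega⟩ (by simp)
        rfl).trans ha
    have := hmin 1 1 (fun _ _ => a) (by omega) (by omega) ⟨fun _ => hXrow, fun _ => hXcol⟩
    omega
  · -- column 0 is ♦♠♠… : impossible
    have hY00 : Y ⟨0, by omega⟩ ⟨0, by omega⟩ = diamond := hc0.2.1 ⟨0, by omega⟩ rfl
    rcases hrow ⟨0, by omega⟩ with h | h | h | h
    · have := h.2.1 ⟨0, by omega⟩ rfl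
      exact absurd (this.symm.trans hY00) heart_ne_diamond
    · -- row 0 is ♦♠♠… then column 1 starts with ♠ : impossible
      have hq2 : 2 ≤ q := by have := h.1; omega
      have hsp : Y ⟨0, by omega⟩ ⟨1, by omega⟩ = spade := h.2.2 ⟨1, by omega⟩ (by simp)
      rcases hcol ⟨1, by omega⟩ with h' | h' | h' | h'
      · have := h'.2.1 ⟨0, by omega⟩ rfl
        exact absurd (this.symm.trans hsp) heart_ne_spade
      · have := h'.2.1 ⟨0, by omega⟩ rfl
        exact absurd (this.symm.trans hsp) diamond_ne_spade
      · obtain ⟨a, ha⟩ := h'.2.1 ⟨0, by omega⟩ (by simp; omega)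
        exact absurd (ha.symm.trans hsp) (inl_ne_spade a)
      · have := h'.2.1 ⟨0, by omega⟩ (by simp; omega)
        exact absurd (this.symm.trans hsp) heart_ne_spade
    · obtain ⟨a, ha⟩ := h.2.1 ⟨0, by omega⟩ (by simp; omega)
      exact absurd (ha.symm.trans hY00) (inl_ne_diamond a)
    · have := h.2.1 ⟨0, by omega⟩ (by simp; omega)
      exact absurd (this.symm.trans hY00) heart_ne_diamond
  · -- column 0 is w♠ : then row p starts with ♠ : impossible
    have hsp : Y ⟨p, by omega⟩ ⟨0, by omega⟩ = spade := hc0.2.2.1 ⟨p, by omega⟩ (by simp)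
    rcases hrow ⟨p, by omega⟩ with h | h | h | h
    · have := h.2.1 ⟨0, by omega⟩ rfl
      exact absurd (this.symm.trans hsp) heart_ne_spade
    · have := h.2.1 ⟨0, by omega⟩ rfl
      exact absurd (this.symm.trans hsp) diamond_ne_spade
    · obtain ⟨a, ha⟩ := h.2.1 ⟨0, by omega⟩ (by simp; omega)
      exact absurd (ha.symm.trans hsp) (inl_ne_spade a)
    · have := h.2.1 ⟨0, by omega⟩ (by simp; omega)
      exact absurd (this.symm.trans hsp) heart_ne_spade
  · -- column 0 is ♥♥…♦ : contradicts hd1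
    exact absurd (hc0.2.2 ⟨p, by omega⟩ (by simp)) hd1

theorem every_EE_crossword_comes_from_rho {σ : Type}
    (R C : RegularExpression σ) (hplural : Plural R C)
    (m n : ℕ) (hm : 0 < m) (hn : 0 < n)
    (Y : Matrix (Fin m) (Fin n) (σ ⊕ Fin 3))
    (hY : IsCrossword (Eexp R C) (Eexp R C) Y) :
    ∃ (p q : ℕ) (X : Matrix (Fin p) (Fin q) σ),
      0 < p ∧ 0 < q ∧ IsCrossword R C X ∧
      ((m = p + 1 ∧ n = q + 1 ∧ HEq (rho X) Y) ∨
        (n = p + 1 ∧ m = q + 1 ∧ HEq (rho X) Y.transpose)) := by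
  obtain ⟨p, rfl⟩ : ∃ p, m = p + 1 := ⟨m - 1, by omega⟩
  obtain ⟨q, rfl⟩ : ∃ q, n = q + 1 := ⟨n - 1, by omega⟩
  rcases corner R C hplural p q Y hY with hd | hd
  · obtain ⟨hp, hq, X, hX, hrho⟩ := main_case R C hplural p q Y hY hd
    exact ⟨p, q, X, hp, hq, hX, Or.inl ⟨rfl, rfl, heq_of_eq hrho⟩⟩
  · have hYT : IsCrossword (Eexp R C) (Eexp R C) Y.transpose := ⟨hY.2, hY.1⟩
    obtain ⟨hp, hq, X, hX, hrho⟩ := main_case R C hplural q p Y.transpose hYT hd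
    exact ⟨q, p, X, hp, hq, hX, Or.inr ⟨rfl, rfl, heq_of_eq hrho⟩⟩


end RegexCrossword
end

section
/- Let m, n, k ≥ 1 and let inc : Fin m → Fin n → Bool be arbitrary (e.g., the vertex–edge incidence matrix of a graph with m vertices and n edges). For each i let r_i denote the length-n word over {0,1} whose j-th letter is inc i j, and let R_i be the regular expression (r_i · 1) ∪ 0^*. Then there exists an m×(n+1) matrix over Bool whose i-th row matches R_i for every i, whose j-th column matches 0^* 1 (0 ∪ 1)^* for every j ≤ n, and whose (n+1)-st column matches (0^* (1 ∪ ε))^k 0^*, if and only if there exists a set S ⊆ Fin m with |S| ≤ k such that for every j ∈ Fin n there is some i ∈ S with inc i j = true (i.e., S is a vertex cover of size at most k). -/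
namespace RegexCrossword

/-- `k`-fold concatenation of a regular expression. -/
def rePow {σ : Type} (r : RegularExpression σ) : ℕ → RegularExpression σ
  | 0 => 1
  | k + 1 => r * rePow r k

/-- The regular expression matched exactly by the word `w`. -/
def wordRE {σ : Type} : List σ → RegularExpression σ
  | [] => 1
  | a :: w => RegularExpression.char a * wordRE w

section Helpers
open RegularExpression

lemma wordRE_matches {σ : Type} (u : List σ) : (wordRE u).matches' = {u} := by
  induction u with
  | nil => simp [wordRE, matches'_epsilon, Language.one_def]; rfl
  | cons a w ih =>
    ext x
    simp [wordRE, matches'_mul, Language.mem_mul, ih, matches'_char, Set.mem_singleton_iff]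
    constructor
    · rintro ⟨p, rfl, q, rfl, rfl⟩; rfl
    · rintro rfl; exact ⟨[a], rfl, w, rfl, rfl⟩

lemma flatten_map_single (w : List Bool) : (w.map (fun b => [b])).flatten = w := by
  induction w with
  | nil => rfl
  | cons a l ih => simp [ih]

lemma mem_star_false {w : List Bool} :
    w ∈ ((char false : RegularExpression Bool).star).matches' ↔ ∀ b ∈ w, b = false := by
  rw [matches'_star, Language.mem_kstar]
  constructor
  · rintro ⟨L, rfl, hL⟩ b hb
    obtain ⟨l, hl, hbl⟩ := List.mem_flatten.1 hb
    have := hL l hl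
    rw [matches'_char] at this; replace this : l = [false] := this
    subst this; simpa using hbl
  · intro h
    refine ⟨w.map (fun b => [b]), ?_, ?_⟩
    · exact (flatten_map_single w).symm
    · intro y hy
      simp only [List.mem_map] at hy
      obtain ⟨b, hb, rfl⟩ := hy
      rw [matches'_char]; exact congrArg (fun x => [x]) (h b hb)

lemma mem_star_any (w : List Bool) :
    w ∈ ((char false + char true : RegularExpression Bool).star).matches' := by
  rw [matches'_star, Language.mem_kstar]
  refine ⟨w.map (fun b => [b]), (flatten_map_single w).symm, ?_⟩
  intro y hy
  simp only [List.mem_map] at hy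
  obtain ⟨b, hb, rfl⟩ := hy
  rw [matches'_add]
  cases b
  · left; rw [matches'_char]; rfl
  · right; rw [matches'_char]; rfl


lemma dropWhile_head_false {p : Bool → Bool} {w : List Bool} {c : Bool} {rest : List Bool}
    (h : w.dropWhile p = c :: rest) : p c = false := by
  induction w with
  | nil => simp at h
  | cons a l ih =>
    rw [List.dropWhile_cons] at h
    split at h
    · exact ih h
    · cases h; simp_all

noncomputable abbrev rfac : RegularExpression Bool := (char false).star * (char true + 1)

lemma count_rfac {w : List Bool} (h : w ∈ rfac.matches') : w.count true ≤ 1 := by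
  rw [matches'_mul, Language.mem_mul] at h
  obtain ⟨a, ha, b, hb, rfl⟩ := h
  rw [mem_star_false] at ha
  rw [matches'_add, matches'_char] at hb
  have hca : a.count true = 0 := by
    rw [List.count_eq_zero]
    intro hmem; exact Bool.true_eq_false.mp (ha _ hmem) |>.elim
  rcases hb with hb | hb
  · replace hb : b = [true] := hb
    subst hb; simp [List.count_append, hca]
  · rw [matches'_epsilon] at hb; replace hb : b = [] := hb
    subst hb; simp [List.count_append, hca]

lemma lastcol_iff (k : ℕ) (w : List Bool) :
    w ∈ (rePow rfac k * (char false).star).matches' ↔ w.count true ≤ k := by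
  constructor
  · intro h
    rw [matches'_mul, Language.mem_mul] at h
    obtain ⟨a, ha, b, hb, rfl⟩ := h
    have hb0 : b.count true = 0 := by
      rw [List.count_eq_zero]; intro hmem
      exact (Bool.true_eq_false.mp ((mem_star_false).1 hb _ hmem)).elim
    rw [List.count_append, hb0, add_zero]
    clear hb hb0
    induction k generalizing a with
    | zero =>
      rw [rePow, matches'_epsilon, Language.mem_one] at ha; subst ha; simp
    | succ k ih =>
      rw [rePow, matches'_mul, Language.mem_mul] at ha
      obtain ⟨p, hp, q, hq, rfl⟩ := ha
      rw [List.count_append]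
      have h1 := count_rfac hp
      have h2 := ih q hq
      omega
  · intro h
    induction k generalizing w with
    | zero =>
      rw [Nat.le_zero, List.count_eq_zero] at h
      rw [matches'_mul, Language.mem_mul]
      refine ⟨[], ?_, w, ?_, rfl⟩
      · rw [rePow, matches'_epsilon]; exact Language.nil_mem_one
      · rw [mem_star_false]; intro b hb
        cases b
        · rfl
        · exact (h hb).elim
    | succ k ih =>
      by_cases hw : true ∈ w
      · -- split at first true
        set A := w.takeWhile (fun b => !b) with hA
        set B := w.dropWhile (fun b => !b) with hB
        have hsplit : A ++ B = w := List.takeWhile_append_dropWhile (p := fun b => !b) (l := w)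
        have hAfalse : ∀ b ∈ A, b = false := by
          intro b hb
          have := List.mem_takeWhile_imp hb
          simpa using this
        have hBne : B ≠ [] := by
          intro hnil
          rw [List.dropWhile_eq_nil_iff] at hnil
          have := hnil _ hw
          simp at this
        obtain ⟨c, rest, hcr⟩ := List.exists_cons_of_ne_nil hBne
        have hc : c = true := by
          have := dropWhile_head_false (hB.symm.trans hcr)
          simpa using this
        subst hc
        have hwsplit : w = A ++ true :: rest := by rw [← hsplit, hcr]
        have hcount : rest.count true ≤ k := by
          have : w.count true = A.count true + (1 + rest.count true) := by
            rw [hwsplit, List.count_append, List.count_cons]; simp [add_comm]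
          have hA0 : A.count true = 0 := by
            rw [List.count_eq_zero]; intro hmem
            exact (Bool.true_eq_false.mp (hAfalse _ hmem)).elim
          omega
        have hrest := ih rest hcount
        rw [matches'_mul, Language.mem_mul] at hrest
        obtain ⟨p, hp, q, hq, rfl⟩ := hrest
        rw [matches'_mul, Language.mem_mul]
        refine ⟨(A ++ [true]) ++ p, ?_, q, hq, by rw [hwsplit]; simp⟩
        rw [rePow, matches'_mul, Language.mem_mul]
        refine ⟨A ++ [true], ?_, p, hp, rfl⟩
        rw [matches'_mul, Language.mem_mul]
        refine ⟨A, ?_, [true], ?_, rfl⟩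
        · rw [mem_star_false]; exact hAfalse
        · rw [matches'_add]; left; rw [matches'_char]; rfl
      · -- no true: prepend empty factor
        have h0 : w.count true ≤ k := by
          rw [List.count_eq_zero.2 hw]; exact Nat.zero_le _
        have hrest := ih w h0
        rw [matches'_mul, Language.mem_mul] at hrest
        obtain ⟨p, hp, q, hq, rfl⟩ := hrest
        rw [matches'_mul, Language.mem_mul]
        refine ⟨[] ++ p, ?_, q, hq, rfl⟩
        rw [rePow, matches'_mul, Language.mem_mul]
        refine ⟨[], ?_, p, hp, rfl⟩
        rw [matches'_mul, Language.mem_mul]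
        refine ⟨[], ?_, [], ?_, rfl⟩
        · rw [mem_star_false]; intro b hb; simp at hb
        · rw [matches'_add]; right; rw [matches'_epsilon]; exact Language.nil_mem_one


lemma count_ofFn {n : ℕ} (f : Fin n → Bool) :
    (List.ofFn f).count true = (Finset.univ.filter fun i => f i = true).card := by
  induction n with
  | zero => simp
  | succ n ih =>
    rw [List.ofFn_succ, List.count_cons, ih (fun i => f i.succ)]
    rw [Finset.card_filter, Finset.card_filter, Fin.sum_univ_succ]
    simp [add_comm]

lemma row_iff (u w : List Bool) :
    w ∈ (wordRE u * char true + (char false).star).matches' ↔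
      w = u ++ [true] ∨ ∀ b ∈ w, b = false := by
  rw [matches'_add]
  constructor
  · rintro (h | h)
    · left
      rw [matches'_mul] at h; replace h := Language.mem_mul.1 h
      obtain ⟨a, ha, b, hb, rfl⟩ := h
      rw [wordRE_matches] at ha; replace ha : a = u := ha
      rw [matches'_char] at hb; replace hb : b = [true] := hb
      rw [ha, hb]
    · right; exact mem_star_false.1 h
  · rintro (rfl | h)
    · left
      rw [matches'_mul]; apply Language.mem_mul.2
      exact ⟨u, by rw [wordRE_matches]; rfl, [true], by rw [matches'_char]; rfl, rfl⟩
    · right; exact mem_star_false.2 h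

lemma col_iff (w : List Bool) :
    w ∈ ((char false).star * char true *
        (char false + char true : RegularExpression Bool).star).matches' ↔ true ∈ w := by
  constructor
  · intro h
    rw [matches'_mul, Language.mem_mul] at h
    obtain ⟨a, ha, b, _, rfl⟩ := h
    rw [matches'_mul, Language.mem_mul] at ha
    obtain ⟨p, _, q, hq, rfl⟩ := ha
    rw [matches'_char] at hq; replace hq : q = [true] := hq
    subst hq
    simp
  · intro hw
    set A := w.takeWhile (fun b => !b) with hA
    set B := w.dropWhile (fun b => !b) with hB
    have hsplit : A ++ B = w := List.takeWhile_append_dropWhile (p := fun b => !b) (l := w)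
    have hAfalse : ∀ b ∈ A, b = false := by
      intro b hb; simpa using List.mem_takeWhile_imp hb
    have hBne : B ≠ [] := by
      intro hnil
      rw [List.dropWhile_eq_nil_iff] at hnil
      simpa using hnil _ hw
    obtain ⟨c, rest, hcr⟩ := List.exists_cons_of_ne_nil hBne
    have hc : c = true := by simpa using dropWhile_head_false (hB.symm.trans hcr)
    subst hc
    rw [matches'_mul, Language.mem_mul]
    refine ⟨A ++ [true], ?_, rest, mem_star_any rest, by rw [← hsplit, hcr]; simp⟩
    rw [matches'_mul, Language.mem_mul]
    exact ⟨A, mem_star_false.2 hAfalse, [true], by rw [matches'_char]; rfl, rfl⟩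


lemma ofFn_g {m n : ℕ} (inc : Fin m → Fin n → Bool) (i : Fin m) :
    (List.ofFn fun j : Fin (n + 1) =>
        if h : (j : ℕ) < n then inc i ⟨j, h⟩ else true) =
      (List.ofFn fun j => inc i j) ++ [true] := by
  rw [List.ofFn_succ']
  simp only [List.concat_eq_append]
  congr 1
  · congr 1
    funext j
    simp [j.is_lt]
  · simp


end Helpers

open RegularExpression in
/-- **Statement 14 (vertex cover reduction).**  Given `inc : Fin m → Fin n → Bool`
(the incidence matrix of a graph with `m` vertices and `n` edges) and `k ≥ 1`,
there is an `m × (n+1)` Boolean matrix whose `i`-th row matches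
`R_i := r_i·1 ∪ 0^*` (where `r_i` is the `i`-th row of `inc`), whose first `n`
columns match `0^* 1 (0 ∪ 1)^*`, and whose last column matches
`(0^* (1 ∪ ε))^k 0^*`, if and only if the graph has a vertex cover of size at
most `k`. -/
theorem vertex_cover_reduction (m n k : ℕ) (hm : 1 ≤ m) (hn : 1 ≤ n) (hk : 1 ≤ k)
    (inc : Fin m → Fin n → Bool) :
    (∃ Y : Matrix (Fin m) (Fin (n + 1)) Bool,
      (∀ i : Fin m,
        (List.ofFn fun j => Y i j) ∈
          (wordRE (List.ofFn fun j => inc i j) * char true +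
            (char false).star).matches') ∧
      (∀ j : Fin (n + 1), (j : ℕ) < n →
        (List.ofFn fun i => Y i j) ∈
          ((char false).star * char true *
            (char false + char true).star).matches') ∧
      ((List.ofFn fun i => Y i (Fin.last n)) ∈
        (rePow ((char false).star * (char true + 1)) k *
          (char false).star).matches')) ↔
    (∃ S : Finset (Fin m), S.card ≤ k ∧ ∀ j : Fin n, ∃ i ∈ S, inc i j = true) := by
  constructor
  · rintro ⟨Y, hrow, hcol, hlast⟩
    refine ⟨Finset.univ.filter fun i => Y i (Fin.last n) = true, ?_, ?_⟩
    · rw [← count_ofFn]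
      exact (lastcol_iff k _).1 hlast
    · intro j
      have hj : ((j.castSucc : Fin (n + 1)) : ℕ) < n := j.is_lt
      have hcolj := (col_iff _).1 (hcol j.castSucc hj)
      rw [List.mem_ofFn] at hcolj
      obtain ⟨i, hi0⟩ := hcolj
      have hi : Y i j.castSucc = true := hi0
      rcases (row_iff _ _).1 (hrow i) with heq | hall
      · -- row i is inc-row ++ [true]
        rw [← ofFn_g inc i, List.ofFn_inj] at heq
        have hlasti : Y i (Fin.last n) = true := by
          have := congrFun heq (Fin.last n)
          simpa using this
        have hji : inc i j = true := by
          have := congrFun heq j.castSucc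
          beta_reduce at this
          rw [hi] at this
          rw [dif_pos hj] at this
          simpa using this.symm
        exact ⟨i, Finset.mem_filter.2 ⟨Finset.mem_univ _, hlasti⟩, hji⟩
      · exfalso
        have : Y i j.castSucc = false := hall _ (by rw [List.mem_ofFn]; exact ⟨j.castSucc, rfl⟩)
        rw [hi] at this; exact Bool.true_eq_false.mp this
  · rintro ⟨S, hcard, hcover⟩
    refine ⟨fun i j => if i ∈ S then (if h : (j : ℕ) < n then inc i ⟨j, h⟩ else true)
        else false, ?_, ?_, ?_⟩
    · intro i
      rw [row_iff]
      by_cases hi : i ∈ S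
      · left
        simp only [if_pos hi]
        exact ofFn_g inc i
      · right
        intro b hb
        rw [List.mem_ofFn] at hb
        obtain ⟨j, rfl⟩ := hb
        simp [if_neg hi]
    · intro j hj
      rw [col_iff, List.mem_ofFn]
      obtain ⟨i, hiS, hinc⟩ := hcover ⟨j, hj⟩
      exact ⟨i, by simp [if_pos hiS, dif_pos hj, hinc]⟩
    · rw [lastcol_iff, count_ofFn]
      refine le_trans (le_of_eq ?_) hcard
      congr 1
      ext i
      simp only [Finset.mem_filter, Finset.mem_univ, true_and]
      by_cases hi : i ∈ S
      · simp [hi, Fin.last]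
      · simp [hi]

end RegexCrossword
end

section
/- Let n ≥ 1 and let c_1, …, c_m be clauses, where each clause is a nonempty finite list of literals and a literal is a pair (j, b) with j ∈ Fin n and b ∈ Bool. For each i define the regular expression R_i over Bool as the union, over literals (j, b) occurring in c_i, of (0 ∪ 1)^j · b · (0 ∪ 1)^{n−1−j}. Then there exists an m×n matrix over Bool each of whose columns matches 0^* ∪ 1^* and whose i-th row matches R_i for every i, if and only if there exists an assignment a : Fin n → Bool such that every clause c_i contains a literal (j, b) with a(j) = b (i.e., the CNF formula with clauses c_1, …, c_m is satisfiable). -/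
namespace RegexCrossword

open RegularExpression in
/-- The regular expression `(0 ∪ 1)^j · b · (0 ∪ 1)^{n−1−j}` of a literal `(j, b)`. -/
def litRE (n : ℕ) (l : Fin n × Bool) : RegularExpression Bool :=
  rePow (char false + char true) (l.1 : ℕ) * char l.2 *
    rePow (char false + char true) (n - 1 - (l.1 : ℕ))

/-- The regular expression of a clause: the union of the expressions of its
literals. -/
def clauseRE (n : ℕ) (c : List (Fin n × Bool)) : RegularExpression Bool :=
  (c.map (litRE n)).foldr (· + ·) 0

open RegularExpression

lemma mem_rePow_any (k : ℕ) (w : List Bool) :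
    w ∈ (rePow (char false + char true) k).matches' ↔ w.length = k := by
  induction k generalizing w with
  | zero => simp [rePow, List.length_eq_zero_iff]
  | succ k ih =>
    simp only [rePow, matches'_mul, Language.mem_mul, matches'_add, matches'_char,
      Language.mem_add, Set.mem_singleton_iff]
    constructor
    · rintro ⟨u, hu, v, hv, rfl⟩
      rcases hu with rfl | rfl <;> simp [(ih v).mp hv]
    · intro h
      cases w with
      | nil => simp at h
      | cons x t =>
        refine ⟨[x], ?_, t, (ih t).mpr (by simpa using h), rfl⟩
        cases x
        · exact Or.inl rfl
        · exact Or.inr rfl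
lemma mem_char_star (b : Bool) (w : List Bool) :
    w ∈ ((char b).star).matches' ↔ ∀ x ∈ w, x = b := by
  rw [matches'_star, matches'_char]
  constructor
  · intro h
    rw [Language.mem_kstar] at h
    obtain ⟨L, rfl, hL⟩ := h
    intro x hx
    simp only [List.mem_flatten] at hx
    obtain ⟨y, hy, hxy⟩ := hx
    have this : y = [b] := hL y hy
    subst this; simpa using hxy
  · intro h
    rw [Language.mem_kstar]
    refine ⟨w.map (fun x => [x]), by
      clear h; induction w with
      | nil => rfl
      | cons a t iw =>
        simp only [List.map_cons, List.flatten_cons, List.singleton_append]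
        rw [← iw], ?_⟩
    intro y hy
    simp only [List.mem_map] at hy
    obtain ⟨x, hx, rfl⟩ := hy
    exact Set.mem_singleton_iff.mpr (by rw [h x hx])
lemma mem_litRE {n : ℕ} (l : Fin n × Bool) (f : Fin n → Bool) :
    (List.ofFn f) ∈ (litRE n l).matches' ↔ f l.1 = l.2 := by
  have hjn : (l.1 : ℕ) < n := l.1.isLt
  simp only [litRE, matches'_mul, Language.mem_mul, matches'_char,
    mem_rePow_any, Set.mem_singleton_iff]
  constructor
  · rintro ⟨uv, ⟨u, hu, v, rfl, rfl⟩, t, ht, hw⟩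
    have hlt : (l.1 : ℕ) < (List.ofFn f).length := by simpa using hjn
    have h1 : (List.ofFn f)[(l.1 : ℕ)]? = some l.2 := by
      rw [← hw, List.append_assoc, List.getElem?_append_right (by omega)]
      simp [hu]
    rw [List.getElem?_eq_getElem hlt, List.getElem_ofFn] at h1
    simpa using h1
  · intro h
    refine ⟨(List.ofFn f).take (l.1 : ℕ) ++ [l.2],
      ⟨(List.ofFn f).take (l.1 : ℕ), by simp [hjn.le], [l.2], rfl, rfl⟩,
      (List.ofFn f).drop ((l.1 : ℕ) + 1), by simp; omega, ?_⟩
    rw [List.append_assoc]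
    conv_rhs => rw [← List.take_append_drop (l.1 : ℕ) (List.ofFn f),
      List.drop_eq_getElem_cons (by simpa using hjn)]
    congr 1
    simp [List.getElem_ofFn, ← h]
lemma mem_clauseRE {n : ℕ} (c : List (Fin n × Bool)) (w : List Bool) :
    w ∈ (clauseRE n c).matches' ↔ ∃ l ∈ c, w ∈ (litRE n l).matches' := by
  induction c with
  | nil => simp [clauseRE]
  | cons h t ih =>
    simp only [clauseRE, List.map_cons, List.foldr_cons, matches'_add,
      Language.mem_add] at ih ⊢
    rw [ih]; simp

open RegularExpression in
/-- **Statement 15 (SAT reduction).**  Let `n ≥ 1` and let `c_1, …, c_m` be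
nonempty clauses of literals over variables `Fin n`.  There is an `m × n`
Boolean matrix each of whose columns matches `0^* ∪ 1^*` and whose `i`-th row
matches the clause expression `R_i`, if and only if the CNF formula with these
clauses is satisfiable. -/
theorem sat_reduction (m n : ℕ) (hn : 1 ≤ n)
    (cls : Fin m → List (Fin n × Bool)) (hcls : ∀ i, cls i ≠ []) :
    (∃ X : Matrix (Fin m) (Fin n) Bool,
      (∀ j : Fin n,
        (List.ofFn fun i => X i j) ∈
          ((char false).star + (char true).star).matches') ∧
      (∀ i : Fin m,
        (List.ofFn fun j => X i j) ∈ (clauseRE n (cls i)).matches')) ↔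
    (∃ a : Fin n → Bool, ∀ i : Fin m, ∃ l ∈ cls i, a l.1 = l.2) := by
  constructor
  · rintro ⟨X, hcol, hrow⟩
    rcases Nat.eq_zero_or_pos m with rfl | hm
    · exact ⟨fun _ => false, fun i => i.elim0⟩
    have hconst : ∀ (j : Fin n) (i1 i2 : Fin m), X i1 j = X i2 j := by
      intro j i1 i2
      have hc := hcol j
      simp only [matches'_add, Language.mem_add, mem_char_star] at hc
      rcases hc with hc | hc <;>
        exact (hc _ (List.mem_ofFn.mpr ⟨i1, rfl⟩)).trans
          (hc _ (List.mem_ofFn.mpr ⟨i2, rfl⟩)).symm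
    refine ⟨fun j => X ⟨0, hm⟩ j, fun i => ?_⟩
    obtain ⟨l, hl, hmatch⟩ := (mem_clauseRE _ _).mp (hrow i)
    exact ⟨l, hl, by show X ⟨0, hm⟩ l.1 = l.2; rw [hconst l.1 ⟨0, hm⟩ i]; exact (mem_litRE l (fun j => X i j)).mp hmatch⟩
  · rintro ⟨a, ha⟩
    refine ⟨fun _ j => a j, fun j => ?_, fun i => ?_⟩
    · simp only [matches'_add, Language.mem_add, mem_char_star]
      cases hb : a j
      · left; intro x hx
        obtain ⟨i, rfl⟩ := List.mem_ofFn.mp hx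
        rfl
      · right; intro x hx
        obtain ⟨i, rfl⟩ := List.mem_ofFn.mp hx
        rfl
    · obtain ⟨l, hl, hal⟩ := ha i
      exact (mem_clauseRE _ _).mpr ⟨l, hl, (mem_litRE l a).mpr hal⟩


end RegexCrossword
end
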